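/- Let G be the graph with vertex set ℤ, where x and y are adjacent iff |x - y| = 1, all vertex weights and edge weights equal to 1, and δ_x(y) defined by δ_x(x) = 2, δ_x(y) = -1 if |x - y| = 1, and δ_x(y) = 0 otherwise. Then for all x, y ∈ ℤ with x - y = j ≥ 0 and all ℓ ≥ 1, the sum over z_1, ..., z_{ℓ-1} ∈ ℤ of δ_x(z_1) δ_{z_1}(z_2) ⋯ δ_{z_{ℓ-1}}(y) equals the sum over pairs (i, k) of nonnegative integers with k + j + 2i = ℓ of (-1)^{ℓ+k} * (ℓ! / (k! * i! * (i+j)!)) * 2^k. -/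

import Mathlib

/-- The Laplacian matrix of `ℤ` with unit weights. -/
noncomputable def deltaZ : ℤ → ℤ → ℝ :=
  fun x y => if x = y then 2 else if |x - y| = 1 then -1 else 0

/-- `deltaZPow ℓ` is the `ℓ`-th matrix power of `deltaZ` (the identity for `ℓ = 0`). -/
noncomputable def deltaZPow : ℕ → ℤ → ℤ → ℝ
  | 0 => fun x y => if x = y then 1 else 0
  | n + 1 => fun x y => ∑' z, deltaZPow n x z * deltaZ z y

namespace DZHelper

open Polynomial

lemma deltaZ_eq_zero {z y : ℤ} (h1 : z ≠ y) (h2 : z ≠ y - 1) (h3 : z ≠ y + 1) :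
    deltaZ z y = 0 := by
  have habs : ¬ |z - y| = 1 := by
    intro h
    rw [abs_eq (by norm_num : (0:ℤ) ≤ 1)] at h
    omega
  simp [deltaZ, h1, habs]

lemma deltaZ_self (y : ℤ) : deltaZ y y = 2 := by simp [deltaZ]

lemma deltaZ_left (y : ℤ) : deltaZ (y - 1) y = -1 := by
  have h1 : y - 1 ≠ y := by omega
  have h2 : |y - 1 - y| = 1 := by
    rw [abs_eq (by norm_num : (0:ℤ) ≤ 1)]; omega
  simp [deltaZ, h1, h2]

lemma deltaZ_right (y : ℤ) : deltaZ (y + 1) y = -1 := by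
  have h1 : y + 1 ≠ y := by omega
  have h2 : |y + 1 - y| = 1 := by
    rw [abs_eq (by norm_num : (0:ℤ) ≤ 1)]; omega
  simp [deltaZ, h1, h2]

lemma deltaZPow_succ (n : ℕ) (x y : ℤ) :
    deltaZPow (n + 1) x y =
      2 * deltaZPow n x y - deltaZPow n x (y - 1) - deltaZPow n x (y + 1) := by
  have hs : deltaZPow (n + 1) x y
      = ∑ z ∈ ({y - 1, y, y + 1} : Finset ℤ), deltaZPow n x z * deltaZ z y := by
    show (∑' z, deltaZPow n x z * deltaZ z y) = _
    apply tsum_eq_sum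
    intro b hb
    simp only [Finset.mem_insert, Finset.mem_singleton, not_or] at hb
    rw [deltaZ_eq_zero hb.2.1 hb.1 hb.2.2, mul_zero]
  rw [hs, Finset.sum_insert (by simp; omega), Finset.sum_insert (by simp),
    Finset.sum_singleton, deltaZ_left, deltaZ_self, deltaZ_right]
  ring

noncomputable def D (n : ℕ) (d : ℤ) : ℝ :=
  (-1) ^ d.natAbs * ((2 * n).choose (n + d.natAbs) : ℝ)

lemma chooseRec (n t : ℕ) :
    (2 * n + 2).choose (t + 2)
      = (2 * n).choose t + 2 * (2 * n).choose (t + 1) + (2 * n).choose (t + 2) := by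
  rw [show 2 * n + 2 = (2 * n + 1) + 1 from rfl]
  simp [Nat.choose_succ_succ]
  ring

lemma chooseCenter (n : ℕ) :
    (2 * n + 2).choose (n + 1) = 2 * (2 * n).choose n + 2 * (2 * n).choose (n + 1) := by
  rcases n with _ | s
  · decide
  · have h := chooseRec (s + 1) s
    have hsymm : (2 * (s + 1)).choose s = (2 * (s + 1)).choose (s + 2) := by
      have h2 := Nat.choose_symm (show s + 2 ≤ 2 * (s + 1) by omega)
      rw [show 2 * (s + 1) - (s + 2) = s from by omega] at h2
      exact h2
    show (2 * (s + 1) + 2).choose (s + 2)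
        = 2 * (2 * (s + 1)).choose (s + 1) + 2 * (2 * (s + 1)).choose (s + 2)
    rw [h, hsymm]
    ring

lemma D_symm (n : ℕ) (d : ℤ) : D n (-d) = D n d := by simp [D]

lemma D_rec_nonneg (n : ℕ) (d : ℤ) (hd : 0 ≤ d) :
    D (n + 1) d = 2 * D n d - D n (d + 1) - D n (d - 1) := by
  rcases eq_or_lt_of_le hd with h | h
  · subst h
    simp only [D]
    norm_num
    rw [show 2 * (n + 1) = 2 * n + 2 from by ring, chooseCenter]
    push_cast
    ring
  · obtain ⟨t, ht⟩ : ∃ t, d.natAbs = t + 1 := ⟨d.natAbs - 1, by omega⟩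
    have hp1 : (d + 1).natAbs = t + 2 := by omega
    have hm1 : (d - 1).natAbs = t := by omega
    simp only [D, ht, hp1, hm1]
    rw [show 2 * (n + 1) = 2 * n + 2 from by ring,
      show n + 1 + (t + 1) = (n + t) + 2 from by ring, chooseRec n (n + t),
      show n + (t + 1) = n + t + 1 from by ring,
      show n + (t + 2) = n + t + 2 from by ring]
    push_cast
    rw [pow_succ, pow_succ]
    ring

lemma D_rec (n : ℕ) (d : ℤ) :
    D (n + 1) d = 2 * D n d - D n (d + 1) - D n (d - 1) := by
  rcases le_or_gt 0 d with h | h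
  · exact D_rec_nonneg n d h
  · have key := D_rec_nonneg n (-d) (by omega)
    rw [show -d + 1 = -(d - 1) from by ring, show -d - 1 = -(d + 1) from by ring,
      D_symm n d, D_symm n (d - 1), D_symm n (d + 1), D_symm (n + 1) d] at key
    rw [key]
    ring

lemma deltaZPow_eq_D (n : ℕ) (x y : ℤ) : deltaZPow n x y = D n (x - y) := by
  induction n generalizing y with
  | zero =>
    by_cases h : x = y
    · subst h; simp [deltaZPow, D]
    · have h1 : 1 ≤ (x - y).natAbs := by omega
      have h2 : (2 * 0).choose (0 + (x - y).natAbs) = 0 :=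
        Nat.choose_eq_zero_of_lt (by omega)
      simp [deltaZPow, D, h, h2]
      exact Nat.choose_eq_zero_of_lt (by omega)
  | succ n ih =>
    rw [deltaZPow_succ, ih, ih, ih, D_rec,
      show x - (y - 1) = (x - y) + 1 from by ring,
      show x - (y + 1) = (x - y) - 1 from by ring]

lemma poly_expand (ℓ : ℕ) :
    (1 + X : Polynomial ℕ) ^ (2 * ℓ)
      = ∑ p ∈ Finset.range (ℓ + 1) ×ˢ Finset.range (ℓ + 1),
          ((2 ^ p.2 * ℓ.choose p.2 * (ℓ - p.2).choose p.1 : ℕ) : Polynomial ℕ)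
            * X ^ (p.2 + 2 * p.1) := by
  rw [pow_mul, show (1 + X : Polynomial ℕ) ^ 2 = 2 * X + (1 + X ^ 2) from by ring,
    add_pow, Finset.sum_product, Finset.sum_comm]
  apply Finset.sum_congr rfl
  intro k hk
  simp only [Finset.mem_range] at hk
  have hext : ((1 + X ^ 2 : Polynomial ℕ)) ^ (ℓ - k)
      = ∑ i ∈ Finset.range (ℓ + 1),
          (X ^ 2) ^ i * 1 ^ (ℓ - k - i) * ((ℓ - k).choose i : Polynomial ℕ) := by
    rw [show (1 + X ^ 2 : Polynomial ℕ) = X ^ 2 + 1 from by ring, add_pow]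
    apply Finset.sum_subset
    · intro a ha
      simp only [Finset.mem_range] at *
      omega
    · intro i hi hni
      simp only [Finset.mem_range] at hi hni
      have : ℓ - k < i := by omega
      simp [Nat.choose_eq_zero_of_lt this]
  rw [hext, Finset.mul_sum, Finset.sum_mul]
  apply Finset.sum_congr rfl
  intro i hi
  push_cast
  ring

lemma key (ℓ j : ℕ) (hj : j ≤ ℓ) :
    (∑ p ∈ (Finset.range (ℓ + 1) ×ˢ Finset.range (ℓ + 1)).filter
        (fun p => p.2 + j + 2 * p.1 = ℓ),
      2 ^ p.2 * ℓ.choose p.2 * (2 * p.1 + j).choose p.1) = (2 * ℓ).choose (ℓ + j) := by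
  have h := congrArg (fun q : Polynomial ℕ => q.coeff (ℓ - j)) (poly_expand ℓ)
  rw [show (1 + X : Polynomial ℕ) = X + 1 from by ring] at h
  simp only [Polynomial.finset_sum_coeff, ← Polynomial.C_eq_natCast,
    Polynomial.coeff_C_mul, Polynomial.coeff_X_pow, Polynomial.coeff_X_add_one_pow,
    Nat.cast_id] at h
  have hsymmchoose : (2 * ℓ).choose (ℓ + j) = (2 * ℓ).choose (ℓ - j) := by
    rw [← Nat.choose_symm (show ℓ + j ≤ 2 * ℓ from by omega)]
    congr 1
    omega
  rw [Finset.sum_filter, hsymmchoose, h]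
  apply Finset.sum_congr rfl
  intro p hp
  simp only [Finset.mem_product, Finset.mem_range] at hp
  by_cases hc : p.2 + j + 2 * p.1 = ℓ
  · rw [if_pos hc, if_pos (by omega)]
    rw [show ℓ - p.2 = 2 * p.1 + j from by omega]
    ring
  · rw [if_neg hc, if_neg (by omega), mul_zero]

end DZHelper

open DZHelper in
/-- Combinatorial evaluation of the entries of powers of the Laplacian on `ℤ`. -/
theorem deltaZPow_eval (j : ℕ) (x y : ℤ) (hxy : x - y = j) (ℓ : ℕ) (hℓ : 1 ≤ ℓ) :
    deltaZPow ℓ x y =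
      ∑ p ∈ (Finset.range (ℓ + 1) ×ˢ Finset.range (ℓ + 1)).filter
          (fun p => p.2 + j + 2 * p.1 = ℓ),
        (-1 : ℝ) ^ (ℓ + p.2) *
          ((ℓ.factorial : ℝ) / (p.2.factorial * p.1.factorial * (p.1 + j).factorial)) *
          2 ^ p.2 := by
  have hnat : (x - y).natAbs = j := by omega
  rw [deltaZPow_eq_D, D, hnat]
  by_cases hj : j ≤ ℓ
  · have hterm : ∀ p ∈ (Finset.range (ℓ + 1) ×ˢ Finset.range (ℓ + 1)).filter
        (fun p => p.2 + j + 2 * p.1 = ℓ),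
        (-1 : ℝ) ^ (ℓ + p.2) *
          ((ℓ.factorial : ℝ) / (p.2.factorial * p.1.factorial * (p.1 + j).factorial)) *
          2 ^ p.2
        = (-1 : ℝ) ^ j * ((2 ^ p.2 * ℓ.choose p.2 * (2 * p.1 + j).choose p.1 : ℕ) : ℝ) := by
      intro p hp
      simp only [Finset.mem_filter, Finset.mem_product, Finset.mem_range] at hp
      obtain ⟨⟨hi, hk⟩, hc⟩ := hp
      have h1 : (-1 : ℝ) ^ (ℓ + p.2) = (-1) ^ j := by
        rw [show ℓ + p.2 = 2 * (p.1 + p.2) + j from by omega, pow_add, pow_mul]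
        norm_num
      have h2 : ((ℓ.choose p.2 : ℝ))
          = ℓ.factorial / (p.2.factorial * (2 * p.1 + j).factorial) := by
        rw [Nat.cast_choose ℝ (show p.2 ≤ ℓ from by omega),
          show ℓ - p.2 = 2 * p.1 + j from by omega]
      have h3 : (((2 * p.1 + j).choose p.1 : ℝ))
          = (2 * p.1 + j).factorial / (p.1.factorial * (p.1 + j).factorial) := by
        rw [Nat.cast_choose ℝ (show p.1 ≤ 2 * p.1 + j from by omega),
          show 2 * p.1 + j - p.1 = p.1 + j from by omega]
      rw [h1, show ((2 ^ p.2 * ℓ.choose p.2 * (2 * p.1 + j).choose p.1 : ℕ) : ℝ)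
          = 2 ^ p.2 * (ℓ.choose p.2 : ℝ) * ((2 * p.1 + j).choose p.1 : ℝ) from by
            push_cast; ring, h2, h3]
      have f1 : (p.1.factorial : ℝ) ≠ 0 := Nat.cast_ne_zero.mpr p.1.factorial_ne_zero
      have f2 : (p.2.factorial : ℝ) ≠ 0 := Nat.cast_ne_zero.mpr p.2.factorial_ne_zero
      have f3 : ((p.1 + j).factorial : ℝ) ≠ 0 :=
        Nat.cast_ne_zero.mpr (p.1 + j).factorial_ne_zero
      have f4 : ((2 * p.1 + j).factorial : ℝ) ≠ 0 :=
        Nat.cast_ne_zero.mpr (2 * p.1 + j).factorial_ne_zero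
      field_simp
    rw [Finset.sum_congr rfl hterm, ← Finset.mul_sum, ← Nat.cast_sum, key ℓ j hj]
  · have hempty : (Finset.range (ℓ + 1) ×ˢ Finset.range (ℓ + 1)).filter
        (fun p => p.2 + j + 2 * p.1 = ℓ) = ∅ := by
      apply Finset.filter_eq_empty_iff.mpr
      intro p hp
      omega
    rw [hempty, Finset.sum_empty,
      Nat.choose_eq_zero_of_lt (show 2 * ℓ < ℓ + j from by omega)]
    simp
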